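/- The vector ρ₁₀ := e_L lies in Γ^∨, spans an extremal ray of Γ^∨, and satisfies ⟨K, ρ₁₀⟩ = −4; hence ρ₁₀ (the class of a line in ℙ³ pulled back to M̄_{0,6}) is a coextremal ray of M̄_{0,6}. -/

import Mathlib

noncomputable section

/-- Index in `Fin 16` of the exceptional class `E_{ab}` attached to a pair of points
(points written `0`-based as elements of `Fin 5`, assuming `a < b`):
`(0,1) ↦ 6, (0,2) ↦ 7, …, (3,4) ↦ 15`. -/
def pairIdx : ℕ → ℕ → Fin 16
  | 0, 1 => 6
  | 0, 2 => 7
  | 0, 3 => 8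
  | 0, 4 => 9
  | 1, 2 => 10
  | 1, 3 => 11
  | 1, 4 => 12
  | 2, 3 => 13
  | 2, 4 => 14
  | 3, 4 => 15
  | _, _ => 0

/-- The coordinate vector `e_L` (the class `L`). -/
def eL : Fin 16 → ℝ := Pi.single 0 1

/-- The coordinate vector `e_i` for the point `i ∈ {1,…,5}` (represented `0`-based
by `i : Fin 5`). -/
def eP (i : Fin 5) : Fin 16 → ℝ := Pi.single ⟨i.val + 1, by omega⟩ 1

/-- The coordinate vector `e_{ab}` for a 2-element subset `{a,b} ⊂ {1,…,5}`
(represented `0`-based); symmetric in `a` and `b`. -/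
def eE (a b : Fin 5) : Fin 16 → ℝ :=
  Pi.single (if a.val < b.val then pairIdx a.val b.val else pairIdx b.val a.val) 1

/-- The standard inner product on `ℝ¹⁶`. -/
def ip (x y : Fin 16 → ℝ) : ℝ := ∑ i, x i * y i

def Distinct3 (k l m : Fin 5) : Prop := k ≠ l ∧ k ≠ m ∧ l ≠ m

def Distinct5 (i j k l m : Fin 5) : Prop :=
  i ≠ j ∧ i ≠ k ∧ i ≠ l ∧ i ≠ m ∧ j ≠ k ∧ j ≠ l ∧ j ≠ m ∧ k ≠ l ∧ k ≠ m ∧ l ≠ m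

/-- The 40 classes: 25 boundary divisors and 15 fixed-point divisors `F_σ` of `M̄₀₆`. -/
def Gamma : Set (Fin 16 → ℝ) :=
  {v | (∃ i : Fin 5, v = eP i) ∨
       (∃ a b : Fin 5, a ≠ b ∧ v = eE a b) ∨
       (∃ k l m : Fin 5, Distinct3 k l m ∧
          v = eL - eP k - eP l - eP m - eE k l - eE k m - eE l m) ∨
       (∃ j a b c d : Fin 5, Distinct5 j a b c d ∧
          v = (2 : ℝ) • eL - (∑ i, eP i) - eE a c - eE a d - eE b c - eE b d)}

/-- The dual cone `Γ^∨ = {v : ⟨g,v⟩ ≥ 0 for all g ∈ Γ}`. -/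
def GammaDual : Set (Fin 16 → ℝ) := {v | ∀ gv ∈ Gamma, 0 ≤ ip gv v}
/-- The canonical class `K = -4e_L + 2(e_1 + ⋯ + e_5) + Σ_{{a,b}} e_{ab}` of `M̄₀₆`. -/
def Kcl : Fin 16 → ℝ :=
  -((4 : ℝ) • eL) + (2 : ℝ) • (∑ i, eP i) +
    ∑ a : Fin 5, ∑ b : Fin 5, if a < b then eE a b else 0

/-- A nonzero `ρ` spans an extremal ray of the convex cone `C` if `ρ ∈ C` and
whenever `v₁, v₂ ∈ C` with `v₁ + v₂ ∈ ℝ₊·ρ`, both `v₁` and `v₂` lie in `ℝ₊·ρ`. -/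
def SpansExtremalRay (C : Set (Fin 16 → ℝ)) (ρ : Fin 16 → ℝ) : Prop :=
  ρ ≠ 0 ∧ ρ ∈ C ∧ ∀ v₁ v₂, v₁ ∈ C → v₂ ∈ C →
    (∃ t : ℝ, 0 ≤ t ∧ v₁ + v₂ = t • ρ) →
    ((∃ t : ℝ, 0 ≤ t ∧ v₁ = t • ρ) ∧ (∃ t : ℝ, 0 ≤ t ∧ v₂ = t • ρ))
/-- `ρ₁₀ = e_L`. -/
def ρ₁₀ : Fin 16 → ℝ := eL


lemma ip_single_left (j : Fin 16) (v : Fin 16 → ℝ) : ip (Pi.single j 1) v = v j := by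
  simp [ip, Pi.single_apply]

lemma ip_eL_right (g : Fin 16 → ℝ) : ip g eL = g 0 := by
  simp [ip, eL, Pi.single_apply]

lemma ip_smul_right (g : Fin 16 → ℝ) (c : ℝ) (v : Fin 16 → ℝ) :
    ip g (c • v) = c * ip g v := by
  unfold ip
  rw [Finset.mul_sum]
  exact Finset.sum_congr rfl fun i _ => by simp; ring

lemma pairIdx_ne_zero : ∀ a b : Fin 5, a ≠ b →
    (if a.val < b.val then pairIdx a.val b.val else pairIdx b.val a.val) ≠ (0 : Fin 16) := by
  decide

lemma eP_zero (i : Fin 5) : eP i 0 = 0 := by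
  rw [eP, Pi.single_apply]
  exact if_neg fun h => by rw [Fin.ext_iff] at h; simp at h

lemma eE_zero (a b : Fin 5) (hab : a ≠ b) : eE a b 0 = 0 := by
  rw [eE, Pi.single_apply]
  exact if_neg fun h => pairIdx_ne_zero a b hab h.symm

lemma eL_zero : eL 0 = 1 := by simp [eL]

lemma gamma_head : ∀ g ∈ Gamma, 0 ≤ g 0 := by
  rintro g (⟨i, rfl⟩ | ⟨a, b, hab, rfl⟩ | ⟨k, l, m, ⟨h1, h2, h3⟩, rfl⟩ |
    ⟨j, a, b, c, d, ⟨_,_,_,_,_,h6,h7,h8,h9,_⟩, rfl⟩)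
  · simp [eP_zero]
  · simp [eE_zero a b hab]
  · simp [eL_zero, eP_zero, eE_zero _ _ h1, eE_zero _ _ h2, eE_zero _ _ h3]
  · simp [eL_zero, eP_zero, eE_zero _ _ h6, eE_zero _ _ h7, eE_zero _ _ h8, eE_zero _ _ h9,
      Finset.sum_apply]

lemma eL_mem_dual : eL ∈ GammaDual := by
  intro g hg
  rw [ip_eL_right]
  exact gamma_head g hg

lemma dual_nonneg {v : Fin 16 → ℝ} (hv : v ∈ GammaDual) :
    ∀ j : Fin 16, j ≠ 0 → 0 ≤ v j := by
  have hP : ∀ i : Fin 5, 0 ≤ v ⟨i.val + 1, by omega⟩ := by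
    intro i
    have h := hv (eP i) (Or.inl ⟨i, rfl⟩)
    simp only [eP] at h
    rwa [ip_single_left] at h
  have hE : ∀ a b : Fin 5, a.val < b.val → 0 ≤ v (pairIdx a.val b.val) := by
    intro a b hab
    have hne : a ≠ b := fun h => by subst h; omega
    have h := hv (eE a b) (Or.inr (Or.inl ⟨a, b, hne, rfl⟩))
    simp only [eE, if_pos hab] at h
    rwa [ip_single_left] at h
  intro j hj
  fin_cases j
  · exact absurd rfl hj
  · exact hP 0
  · exact hP 1
  · exact hP 2
  · exact hP 3
  · exact hP 4
  · exact hE 0 1 (by decide)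
  · exact hE 0 2 (by decide)
  · exact hE 0 3 (by decide)
  · exact hE 0 4 (by decide)
  · exact hE 1 2 (by decide)
  · exact hE 1 3 (by decide)
  · exact hE 1 4 (by decide)
  · exact hE 2 3 (by decide)
  · exact hE 2 4 (by decide)
  · exact hE 3 4 (by decide)

lemma g3_mem : (eL - eP 0 - eP 1 - eP 2 - eE 0 1 - eE 0 2 - eE 1 2) ∈ Gamma :=
  Or.inr (Or.inr (Or.inl ⟨0, 1, 2, ⟨by decide, by decide, by decide⟩, rfl⟩))

lemma dual_scal {v : Fin 16 → ℝ} (hv : v ∈ GammaDual)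
    (hz : ∀ j : Fin 16, j ≠ 0 → v j = 0) : ∃ t : ℝ, 0 ≤ t ∧ v = t • eL := by
  have hveq : v = v 0 • eL := by
    funext j
    by_cases hj : j = 0
    · subst hj; simp [eL]
    · rw [hz j hj]; simp [eL, Pi.single_apply, hj]
  refine ⟨v 0, ?_, hveq⟩
  have h := hv _ g3_mem
  rw [hveq, ip_smul_right, ip_eL_right] at h
  have : (eL - eP 0 - eP 1 - eP 2 - eE 0 1 - eE 0 2 - eE 1 2) 0 = 1 := by
    simp [eL_zero, eP_zero, eE_zero 0 1 (by decide), eE_zero 0 2 (by decide),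
      eE_zero 1 2 (by decide)]
  rw [this, mul_one] at h
  exact h


theorem rho10_coextremal :
    ρ₁₀ ∈ GammaDual ∧ SpansExtremalRay GammaDual ρ₁₀ ∧ ip Kcl ρ₁₀ = -4 := by
  refine ⟨eL_mem_dual, ⟨?_, eL_mem_dual, ?_⟩, ?_⟩
  · intro h
    have := congrFun h 0
    simp [ρ₁₀, eL] at this
  · intro v₁ v₂ h1 h2 ⟨t, ht, hsum⟩
    have key : ∀ j : Fin 16, j ≠ 0 → v₁ j = 0 ∧ v₂ j = 0 := by
      intro j hj
      have a1 := dual_nonneg h1 j hj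
      have a2 := dual_nonneg h2 j hj
      have hs := congrFun hsum j
      simp only [Pi.add_apply, Pi.smul_apply, ρ₁₀, eL, Pi.single_apply,
        if_neg hj, smul_eq_mul, mul_zero] at hs
      constructor <;> linarith
    exact ⟨dual_scal h1 fun j hj => (key j hj).1, dual_scal h2 fun j hj => (key j hj).2⟩
  · rw [ρ₁₀, ip_eL_right]
    have hE : ∀ a b : Fin 5, (if a < b then eE a b else (0 : Fin 16 → ℝ)) 0 = 0 := by
      intro a b
      split
      · exact eE_zero a b (ne_of_lt ‹_›)
      · rfl
    simp [Kcl, eL_zero, eP_zero, Finset.sum_apply, hE]
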